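/- Let u : U → ℝ^{D−d} be smooth on an open set U ⊆ ℝ^d containing 0, with u(0) = 0 and Du(0) = 0, let G(y) := (1/2) log(‖y‖² + ‖u(y)‖²), and for δ negative enough let V_δ := {y ∈ U : ‖y‖² + ‖u(y)‖² < e^{2δ}} and A_δ := (∂/∂δ) Vol(V_δ), the derivative of the Lebesgue volume of V_δ with respect to δ. Then for every ε > 0 there exists K such that for all δ < K, (d − ε) Vol(V_δ) < A_δ < (d + ε) Vol(V_δ); in particular lim_{δ→−∞} A_δ / Vol(V_δ) = d. -/

import Mathlib

open MeasureTheory Real Filter Set Topology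

noncomputable section

/-- The sublevel set `V_δ = {y ∈ U : ‖y‖² + ‖u(y)‖² < e^{2δ}}` of
`G(y) = (1/2) log(‖y‖² + ‖u(y)‖²)`. -/
def sublevel {d m : ℕ} (U : Set (EuclideanSpace ℝ (Fin d)))
    (u : EuclideanSpace ℝ (Fin d) → EuclideanSpace ℝ (Fin m)) (δ : ℝ) :
    Set (EuclideanSpace ℝ (Fin d)) :=
  {y ∈ U | ‖y‖ ^ 2 + ‖u y‖ ^ 2 < Real.exp (2 * δ)}

/-- `Vol(V_δ)`, the `d`-dimensional Lebesgue volume of the sublevel set `V_δ`. -/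
def sublevelVol {d m : ℕ} (U : Set (EuclideanSpace ℝ (Fin d)))
    (u : EuclideanSpace ℝ (Fin d) → EuclideanSpace ℝ (Fin m)) (δ : ℝ) : ℝ :=
  (volume (sublevel U u δ)).toReal

open Metric
open scoped InnerProductSpace


/-- The squared radius along the ray through `v`. -/
private def ray {d m : ℕ} (u : EuclideanSpace ℝ (Fin d) → EuclideanSpace ℝ (Fin m))
    (v : EuclideanSpace ℝ (Fin d)) (t : ℝ) : ℝ :=
  t ^ 2 + ‖u (t • v)‖ ^ 2

/-- Derivative of `ray` in `t`. -/
private def rayD {d m : ℕ} (u : EuclideanSpace ℝ (Fin d) → EuclideanSpace ℝ (Fin m))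
    (v : EuclideanSpace ℝ (Fin d)) (t : ℝ) : ℝ :=
  2 * t + 2 * ⟪u (t • v), (fderiv ℝ u (t • v)) v⟫_ℝ

/-- The radius of the sublevel set along the ray through `v`. -/
private def rad {d m : ℕ} (u : EuclideanSpace ℝ (Fin d) → EuclideanSpace ℝ (Fin m))
    (ρ δ : ℝ) (v : EuclideanSpace ℝ (Fin d)) : ℝ :=
  Function.invFunOn (ray u v) (Set.Ioo 0 ρ) (Real.exp (2 * δ))

section Aux

variable {d m : ℕ} {U : Set (EuclideanSpace ℝ (Fin d))}
  {u : EuclideanSpace ℝ (Fin d) → EuclideanSpace ℝ (Fin m)} {η ρ : ℝ}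
  {v : EuclideanSpace ℝ (Fin d)} {t δ : ℝ}

private lemma smul_mem_cb (hv : ‖v‖ = 1) (ht : t ∈ Icc 0 ρ) :
    t • v ∈ closedBall (0 : EuclideanSpace ℝ (Fin d)) ρ := by
  rw [mem_closedBall_zero_iff, norm_smul, hv, mul_one, Real.norm_eq_abs,
    abs_of_nonneg ht.1]
  exact ht.2

private lemma ray_hasDerivAt (hU : IsOpen U) (hu : ContDiffOn ℝ (⊤ : ℕ∞) u U)
    (hball : closedBall (0:EuclideanSpace ℝ (Fin d)) ρ ⊆ U)
    (hv : ‖v‖ = 1) (ht : t ∈ Icc 0 ρ) :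
    HasDerivAt (ray u v) (rayD u v t) t := by
  have hyU : t • v ∈ U := hball (smul_mem_cb hv ht)
  have hdiff : DifferentiableAt ℝ u (t • v) :=
    (hu.contDiffAt (hU.mem_nhds hyU)).differentiableAt (by simp)
  have hw : HasDerivAt (fun s : ℝ => u (s • v)) ((fderiv ℝ u (t • v)) v) t := by
    have h1 : HasDerivAt (fun s : ℝ => s • v) ((1:ℝ) • v) t :=
      (hasDerivAt_id t).smul_const v
    rw [one_smul] at h1
    exact hdiff.hasFDerivAt.comp_hasDerivAt t h1
  have hq : HasDerivAt (fun s : ℝ => ⟪u (s • v), u (s • v)⟫_ℝ)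
      (⟪u (t • v), (fderiv ℝ u (t • v)) v⟫_ℝ + ⟪(fderiv ℝ u (t • v)) v, u (t • v)⟫_ℝ) t :=
    hw.inner ℝ hw
  have hq' : HasDerivAt (fun s : ℝ => ‖u (s • v)‖ ^ 2)
      (2 * ⟪u (t • v), (fderiv ℝ u (t • v)) v⟫_ℝ) t := by
    have heq : (fun s : ℝ => ‖u (s • v)‖ ^ 2) = fun s : ℝ => ⟪u (s • v), u (s • v)⟫_ℝ := by
      funext s; rw [real_inner_self_eq_norm_sq]
    rw [heq]
    convert hq using 1
    rw [real_inner_comm]; ring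
  have hp : HasDerivAt (fun s : ℝ => s ^ 2) (2 * t) t := by
    simpa using hasDerivAt_pow 2 t
  exact (hp.add hq')

private lemma rayD_bound (hU : IsOpen U) (hu : ContDiffOn ℝ (⊤ : ℕ∞) u U)
    (hball : closedBall (0:EuclideanSpace ℝ (Fin d)) ρ ⊆ U)
    (hub : ∀ y ∈ closedBall (0:EuclideanSpace ℝ (Fin d)) ρ, ‖u y‖ ≤ η * ‖y‖)
    (hDb : ∀ y ∈ closedBall (0:EuclideanSpace ℝ (Fin d)) ρ, ‖fderiv ℝ u y‖ ≤ η)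
    (hη0 : 0 < η) (hv : ‖v‖ = 1) (ht : t ∈ Icc 0 ρ) :
    |rayD u v t - 2 * t| ≤ 2 * η ^ 2 * t := by
  have hmem := smul_mem_cb hv ht
  have h1 : |⟪u (t • v), (fderiv ℝ u (t • v)) v⟫_ℝ| ≤ η ^ 2 * t := by
    calc |⟪u (t • v), (fderiv ℝ u (t • v)) v⟫_ℝ|
        ≤ ‖u (t • v)‖ * ‖(fderiv ℝ u (t • v)) v‖ := abs_real_inner_le_norm _ _
      _ ≤ (η * ‖t • v‖) * (‖fderiv ℝ u (t • v)‖ * ‖v‖) := by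
          apply mul_le_mul (hub _ hmem) ((fderiv ℝ u (t • v)).le_opNorm v) (norm_nonneg _)
          positivity
      _ = (η * t) * ‖fderiv ℝ u (t • v)‖ := by
          rw [norm_smul, hv, Real.norm_eq_abs, abs_of_nonneg ht.1]; ring
      _ ≤ (η * t) * η := by
          apply mul_le_mul_of_nonneg_left (hDb _ hmem)
          exact mul_nonneg hη0.le ht.1
      _ = η ^ 2 * t := by ring
  rw [rayD]
  rw [show 2 * t + 2 * ⟪u (t • v), (fderiv ℝ u (t • v)) v⟫_ℝ - 2 * t
      = 2 * ⟪u (t • v), (fderiv ℝ u (t • v)) v⟫_ℝ by ring]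
  rw [abs_mul, abs_two]
  linarith [h1]


private lemma ray_lb : t ^ 2 ≤ ray u v t := by
  rw [ray]; exact le_add_of_nonneg_right (by positivity)

private lemma ray_ub (hub : ∀ y ∈ closedBall (0:EuclideanSpace ℝ (Fin d)) ρ, ‖u y‖ ≤ η * ‖y‖)
    (hη0 : 0 < η) (hv : ‖v‖ = 1) (ht : t ∈ Icc 0 ρ) :
    ray u v t ≤ (1 + η ^ 2) * t ^ 2 := by
  have h1 : ‖u (t • v)‖ ≤ η * t := by
    have := hub _ (smul_mem_cb hv ht)
    rwa [norm_smul, hv, mul_one, Real.norm_eq_abs, abs_of_nonneg ht.1] at this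
  have h2 : ‖u (t • v)‖ ^ 2 ≤ (η * t) ^ 2 := by
    apply sq_le_sq' _ h1
    linarith [norm_nonneg (u (t • v)), mul_nonneg hη0.le ht.1]
  rw [ray]; nlinarith

private lemma ray_zero (hu0 : u 0 = 0) : ray u v 0 = 0 := by
  rw [ray, zero_smul, hu0]; simp

private lemma rayD_pos (hU : IsOpen U) (hu : ContDiffOn ℝ (⊤ : ℕ∞) u U)
    (hball : closedBall (0:EuclideanSpace ℝ (Fin d)) ρ ⊆ U)
    (hub : ∀ y ∈ closedBall (0:EuclideanSpace ℝ (Fin d)) ρ, ‖u y‖ ≤ η * ‖y‖)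
    (hDb : ∀ y ∈ closedBall (0:EuclideanSpace ℝ (Fin d)) ρ, ‖fderiv ℝ u y‖ ≤ η)
    (hη0 : 0 < η) (hη : η ≤ 1/2) (hv : ‖v‖ = 1) (ht0 : 0 < t) (ht : t ∈ Icc 0 ρ) :
    0 < rayD u v t := by
  have h1 := rayD_bound hU hu hball hub hDb hη0 hv ht
  have h2 : η ^ 2 ≤ 1/4 := by nlinarith
  have := abs_le.1 h1
  nlinarith

private lemma ray_mono (hU : IsOpen U) (hu : ContDiffOn ℝ (⊤ : ℕ∞) u U)
    (hball : closedBall (0:EuclideanSpace ℝ (Fin d)) ρ ⊆ U)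
    (hub : ∀ y ∈ closedBall (0:EuclideanSpace ℝ (Fin d)) ρ, ‖u y‖ ≤ η * ‖y‖)
    (hDb : ∀ y ∈ closedBall (0:EuclideanSpace ℝ (Fin d)) ρ, ‖fderiv ℝ u y‖ ≤ η)
    (hη0 : 0 < η) (hη : η ≤ 1/2) (hρ0 : 0 < ρ) (hv : ‖v‖ = 1) :
    StrictMonoOn (ray u v) (Icc 0 ρ) := by
  apply strictMonoOn_of_deriv_pos (convex_Icc 0 ρ)
  · exact fun s hs => (ray_hasDerivAt hU hu hball hv hs).continuousAt.continuousWithinAt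
  · intro s hs
    rw [interior_Icc] at hs
    rw [(ray_hasDerivAt hU hu hball hv ⟨hs.1.le, hs.2.le⟩).deriv]
    exact rayD_pos hU hu hball hub hDb hη0 hη hv hs.1 ⟨hs.1.le, hs.2.le⟩

private lemma exp_lt (hρ0 : 0 < ρ) (hδ : δ < Real.log ρ) : Real.exp (2 * δ) < ρ ^ 2 := by
  have h1 : Real.exp δ < ρ := by
    calc Real.exp δ < Real.exp (Real.log ρ) := Real.exp_lt_exp.2 hδ
    _ = ρ := Real.exp_log hρ0
  rw [two_mul, Real.exp_add, sq]
  exact mul_lt_mul'' h1 h1 (Real.exp_pos δ).le (Real.exp_pos δ).le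

private lemma rad_spec (hU : IsOpen U) (hu : ContDiffOn ℝ (⊤ : ℕ∞) u U) (hu0 : u 0 = 0)
    (hball : closedBall (0:EuclideanSpace ℝ (Fin d)) ρ ⊆ U)
    (hub : ∀ y ∈ closedBall (0:EuclideanSpace ℝ (Fin d)) ρ, ‖u y‖ ≤ η * ‖y‖)
    (hDb : ∀ y ∈ closedBall (0:EuclideanSpace ℝ (Fin d)) ρ, ‖fderiv ℝ u y‖ ≤ η)
    (hη0 : 0 < η) (hη : η ≤ 1/2) (hρ0 : 0 < ρ) (hv : ‖v‖ = 1) (hδ : δ < Real.log ρ) :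
    rad u ρ δ v ∈ Ioo 0 ρ ∧ ray u v (rad u ρ δ v) = Real.exp (2 * δ) := by
  have hcont : ContinuousOn (ray u v) (Icc 0 ρ) :=
    fun s hs => (ray_hasDerivAt hU hu hball hv hs).continuousAt.continuousWithinAt
  have hmem : Real.exp (2 * δ) ∈ Ioo (ray u v 0) (ray u v ρ) := by
    constructor
    · rw [ray_zero hu0]; exact Real.exp_pos _
    · calc Real.exp (2*δ) < ρ ^ 2 := exp_lt hρ0 hδ
      _ ≤ ray u v ρ := ray_lb
  have hex : ∃ s ∈ Ioo 0 ρ, ray u v s = Real.exp (2 * δ) := by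
    have := intermediate_value_Ioo hρ0.le hcont hmem
    obtain ⟨s, hs, hse⟩ := this
    exact ⟨s, hs, hse⟩
  exact ⟨Function.invFunOn_mem hex, Function.invFunOn_eq hex⟩

private lemma rad_lt_iff (hU : IsOpen U) (hu : ContDiffOn ℝ (⊤ : ℕ∞) u U) (hu0 : u 0 = 0)
    (hball : closedBall (0:EuclideanSpace ℝ (Fin d)) ρ ⊆ U)
    (hub : ∀ y ∈ closedBall (0:EuclideanSpace ℝ (Fin d)) ρ, ‖u y‖ ≤ η * ‖y‖)
    (hDb : ∀ y ∈ closedBall (0:EuclideanSpace ℝ (Fin d)) ρ, ‖fderiv ℝ u y‖ ≤ η)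
    (hη0 : 0 < η) (hη : η ≤ 1/2) (hρ0 : 0 < ρ) (hv : ‖v‖ = 1) (hδ : δ < Real.log ρ)
    (ht : t ∈ Icc 0 ρ) :
    t < rad u ρ δ v ↔ ray u v t < Real.exp (2 * δ) := by
  obtain ⟨hmem, heq⟩ := rad_spec hU hu hu0 hball hub hDb hη0 hη hρ0 hv hδ
  rw [← heq]
  exact ((ray_mono hU hu hball hub hDb hη0 hη hρ0 hv).lt_iff_lt ht
    ⟨hmem.1.le, hmem.2.le⟩).symm


section Aux

variable {d m : ℕ} {U : Set (EuclideanSpace ℝ (Fin d))}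
  {u : EuclideanSpace ℝ (Fin d) → EuclideanSpace ℝ (Fin m)} {η ρ : ℝ}
  {v : EuclideanSpace ℝ (Fin d)} {t δ : ℝ}

variable (hU : IsOpen U) (hu : ContDiffOn ℝ (⊤ : ℕ∞) u U) (hu0 : u 0 = 0)
    (hball : closedBall (0:EuclideanSpace ℝ (Fin d)) ρ ⊆ U)
    (hub : ∀ y ∈ closedBall (0:EuclideanSpace ℝ (Fin d)) ρ, ‖u y‖ ≤ η * ‖y‖)
    (hDb : ∀ y ∈ closedBall (0:EuclideanSpace ℝ (Fin d)) ρ, ‖fderiv ℝ u y‖ ≤ η)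
    (hη0 : 0 < η) (hη : η ≤ 1/2) (hρ0 : 0 < ρ)


include hU hu hball in
private lemma ray_cont_v (hv : ‖v‖ = 1) (ht : t ∈ Icc 0 ρ) :
    ContinuousAt (fun w : EuclideanSpace ℝ (Fin d) => ray u w t) v := by
  have hyU : t • v ∈ U := hball (smul_mem_cb hv ht)
  have hcu : ContinuousAt u (t • v) := (hu.contDiffAt (hU.mem_nhds hyU)).continuousAt
  have h1 : ContinuousAt (fun w : EuclideanSpace ℝ (Fin d) => u (t • w)) v :=
    hcu.comp ((continuous_const_smul t).continuousAt)
  exact continuousAt_const.add ((h1.norm).pow 2)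

include hU hu hu0 hball hub hDb hη0 hη hρ0 in
private lemma rad_cont_sphere (hδ : δ < Real.log ρ) :
    Continuous fun w : sphere (0:EuclideanSpace ℝ (Fin d)) 1 => rad u ρ δ (w:EuclideanSpace ℝ (Fin d)) := by
  rw [continuous_iff_continuousAt]
  intro w₀
  have hv₀ : ‖(w₀:EuclideanSpace ℝ (Fin d))‖ = 1 := mem_sphere_zero_iff_norm.1 w₀.2
  obtain ⟨hm₀, he₀⟩ := rad_spec hU hu hu0 hball hub hDb hη0 hη hρ0 hv₀ hδ
  rw [ContinuousAt, tendsto_order]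
  constructor
  · intro a ha
    rcases le_or_gt a 0 with h | h
    · filter_upwards with w
      have hw : ‖(w:EuclideanSpace ℝ (Fin d))‖ = 1 := mem_sphere_zero_iff_norm.1 w.2
      exact lt_of_le_of_lt h (rad_spec hU hu hu0 hball hub hDb hη0 hη hρ0 hw hδ).1.1
    · have haIcc : a ∈ Icc 0 ρ := ⟨h.le, (ha.trans hm₀.2).le⟩
      have hlt : ray u (w₀:EuclideanSpace ℝ (Fin d)) a < Real.exp (2*δ) :=
        (rad_lt_iff hU hu hu0 hball hub hDb hη0 hη hρ0 hv₀ hδ haIcc).1 ha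
      have hcw := (ray_cont_v hU hu hball hv₀ haIcc).comp
        (continuous_subtype_val.continuousAt (x := w₀))
      have hev := hcw.tendsto.eventually_lt_const hlt
      filter_upwards [hev] with w hw
      have hw1 : ‖(w:EuclideanSpace ℝ (Fin d))‖ = 1 := mem_sphere_zero_iff_norm.1 w.2
      exact (rad_lt_iff hU hu hu0 hball hub hDb hη0 hη hρ0 hw1 hδ haIcc).2 hw
  · intro b hb
    set t₂ := (rad u ρ δ (w₀:EuclideanSpace ℝ (Fin d)) + min b ρ)/2 with ht₂def
    have h1 : rad u ρ δ (w₀:EuclideanSpace ℝ (Fin d)) < t₂ := by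
      rw [ht₂def]
      have : rad u ρ δ (w₀:EuclideanSpace ℝ (Fin d)) < min b ρ := lt_min hb hm₀.2
      linarith
    have h2 : t₂ < min b ρ := by
      rw [ht₂def]
      have : rad u ρ δ (w₀:EuclideanSpace ℝ (Fin d)) < min b ρ := lt_min hb hm₀.2
      linarith
    have ht₂Icc : t₂ ∈ Icc 0 ρ := by
      constructor
      · rw [ht₂def]
        have := hm₀.1
        have : (0:ℝ) < min b ρ := lt_min (lt_trans hm₀.1 hb) hρ0
        linarith [hm₀.1]
      · exact le_of_lt (lt_of_lt_of_le h2 (min_le_right b ρ))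
    have hgt : Real.exp (2*δ) < ray u (w₀:EuclideanSpace ℝ (Fin d)) t₂ := by
      rw [← he₀]
      exact (ray_mono hU hu hball hub hDb hη0 hη hρ0 hv₀) ⟨hm₀.1.le, hm₀.2.le⟩ ht₂Icc h1
    have hcw := (ray_cont_v hU hu hball hv₀ ht₂Icc).comp
      (continuous_subtype_val.continuousAt (x := w₀))
    have hev := hcw.tendsto.eventually_const_lt hgt
    filter_upwards [hev] with w hw
    have hw1 : ‖(w:EuclideanSpace ℝ (Fin d))‖ = 1 := mem_sphere_zero_iff_norm.1 w.2
    have : ¬ (t₂ < rad u ρ δ (w:EuclideanSpace ℝ (Fin d))) := by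
      rw [rad_lt_iff hU hu hu0 hball hub hDb hη0 hη hρ0 hw1 hδ ht₂Icc]
      exact not_lt.2 hw.le
    exact lt_of_le_of_lt (not_lt.1 this) (lt_of_lt_of_le h2 (min_le_left b ρ))

include hU hu hu0 hball hub hDb hη0 hη hρ0 in
private lemma rad_cont_delta (hv : ‖v‖ = 1) (hδ : δ < Real.log ρ) :
    ContinuousAt (fun s => rad u ρ s v) δ := by
  obtain ⟨hm₀, he₀⟩ := rad_spec hU hu hu0 hball hub hDb hη0 hη hρ0 hv hδ
  rw [ContinuousAt, tendsto_order]
  constructor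
  · intro a ha
    rcases le_or_gt a 0 with h | h
    · filter_upwards [Iio_mem_nhds hδ] with s hs
      exact lt_of_le_of_lt h (rad_spec hU hu hu0 hball hub hDb hη0 hη hρ0 hv hs).1.1
    · have haIcc : a ∈ Icc 0 ρ := ⟨h.le, (ha.trans hm₀.2).le⟩
      have hlt : ray u v a < Real.exp (2*δ) :=
        (rad_lt_iff hU hu hu0 hball hub hDb hη0 hη hρ0 hv hδ haIcc).1 ha
      have hev : ∀ᶠ s in 𝓝 δ, ray u v a < Real.exp (2*s) := by
        have hc : ContinuousAt (fun s : ℝ => Real.exp (2*s)) δ :=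
          (Real.continuous_exp.comp (continuous_const.mul continuous_id)).continuousAt
        exact hc.tendsto.eventually_const_lt hlt
      filter_upwards [hev, Iio_mem_nhds hδ] with s hs1 hs2
      exact (rad_lt_iff hU hu hu0 hball hub hDb hη0 hη hρ0 hv hs2 haIcc).2 hs1
  · intro b hb
    set t₂ := (rad u ρ δ v + min b ρ)/2 with ht₂def
    have hmin : rad u ρ δ v < min b ρ := lt_min hb hm₀.2
    have h1 : rad u ρ δ v < t₂ := by rw [ht₂def]; linarith
    have h2 : t₂ < min b ρ := by rw [ht₂def]; linarith
    have ht₂Icc : t₂ ∈ Icc 0 ρ := by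
      constructor
      · have : (0:ℝ) < min b ρ := lt_min (lt_trans hm₀.1 hb) hρ0
        rw [ht₂def]; linarith [hm₀.1]
      · exact le_of_lt (lt_of_lt_of_le h2 (min_le_right b ρ))
    have hgt : Real.exp (2*δ) < ray u v t₂ := by
      rw [← he₀]
      exact (ray_mono hU hu hball hub hDb hη0 hη hρ0 hv) ⟨hm₀.1.le, hm₀.2.le⟩ ht₂Icc h1
    have hev : ∀ᶠ s in 𝓝 δ, Real.exp (2*s) < ray u v t₂ := by
      have hc : ContinuousAt (fun s : ℝ => Real.exp (2*s)) δ :=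
        (Real.continuous_exp.comp (continuous_const.mul continuous_id)).continuousAt
      exact hc.tendsto.eventually_lt_const hgt
    filter_upwards [hev, Iio_mem_nhds hδ] with s hs1 hs2
    have : ¬ (t₂ < rad u ρ s v) := by
      rw [rad_lt_iff hU hu hu0 hball hub hDb hη0 hη hρ0 hv hs2 ht₂Icc]
      exact not_lt.2 hs1.le
    exact lt_of_le_of_lt (not_lt.1 this) (lt_of_lt_of_le h2 (min_le_left b ρ))

include hU hu hu0 hball hub hDb hη0 hη hρ0 in
private lemma rad_hasDerivAt (hv : ‖v‖ = 1) (hδ : δ < Real.log ρ) :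
    HasDerivAt (fun s => rad u ρ s v)
      (2 * Real.exp (2*δ) / rayD u v (rad u ρ δ v)) δ := by
  obtain ⟨hm₀, he₀⟩ := rad_spec hU hu hu0 hball hub hDb hη0 hη hρ0 hv hδ
  have hRIcc : rad u ρ δ v ∈ Icc 0 ρ := ⟨hm₀.1.le, hm₀.2.le⟩
  have hne : ray u v (rad u ρ δ v) ≠ 0 := by rw [he₀]; exact (Real.exp_pos _).ne'
  have hDpos : 0 < rayD u v (rad u ρ δ v) :=
    rayD_pos hU hu hball hub hDb hη0 hη hv hm₀.1 hRIcc
  have hf : HasDerivAt (fun s => Real.log (ray u v s) / 2)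
      ((rayD u v (rad u ρ δ v) / ray u v (rad u ρ δ v)) / 2) (rad u ρ δ v) :=
    ((ray_hasDerivAt hU hu hball hv hRIcc).log hne).div_const 2
  have hf' : (rayD u v (rad u ρ δ v) / ray u v (rad u ρ δ v)) / 2 ≠ 0 := by
    rw [he₀]
    positivity
  have hfg : ∀ᶠ s in 𝓝 δ, Real.log (ray u v (rad u ρ s v)) / 2 = s := by
    filter_upwards [Iio_mem_nhds hδ] with s hs
    rw [(rad_spec hU hu hu0 hball hub hDb hη0 hη hρ0 hv hs).2, Real.log_exp]
    ring
  have hg : ContinuousAt (fun s => rad u ρ s v) δ :=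
    rad_cont_delta hU hu hu0 hball hub hDb hη0 hη hρ0 hv hδ
  have := HasDerivAt.of_local_left_inverse hg hf hf' hfg
  refine this.congr_deriv ?_
  rw [he₀]
  field_simp
include hU hu hu0 hball hub hDb hη0 hη hρ0 in
private lemma P_hasDerivAt (hd : 1 ≤ d) (hv : ‖v‖ = 1) (hδ : δ < Real.log ρ) :
    HasDerivAt (fun s => (rad u ρ s v)^d / d)
      ((rad u ρ δ v)^(d-1) * (2 * Real.exp (2*δ) / rayD u v (rad u ρ δ v))) δ := by
  have h := ((rad_hasDerivAt hU hu hu0 hball hub hDb hη0 hη hρ0 hv hδ).pow d).div_const (d:ℝ)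
  refine h.congr_deriv ?_
  have hd0 : (d:ℝ) ≠ 0 := by
    have h1 : (1:ℝ) ≤ (d:ℝ) := by exact_mod_cast hd
    linarith
  rw [div_eq_iff hd0]
  ring

include hU hu hu0 hball hub hDb hη0 hη hρ0 in
private lemma D_bounds (hd : 1 ≤ d) (hv : ‖v‖ = 1) (hδ : δ < Real.log ρ) :
    (d:ℝ)*(1-3*η^2) * ((rad u ρ δ v)^d/d)
        ≤ (rad u ρ δ v)^(d-1) * (2*Real.exp (2*δ)/rayD u v (rad u ρ δ v)) ∧
    (rad u ρ δ v)^(d-1) * (2*Real.exp (2*δ)/rayD u v (rad u ρ δ v))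
        ≤ (d:ℝ)*(1+3*η^2) * ((rad u ρ δ v)^d/d) ∧
    0 ≤ (rad u ρ δ v)^(d-1) * (2*Real.exp (2*δ)/rayD u v (rad u ρ δ v)) ∧
    (rad u ρ δ v)^(d-1) * (2*Real.exp (2*δ)/rayD u v (rad u ρ δ v)) ≤ 2*ρ^d := by
  obtain ⟨hm, he⟩ := rad_spec hU hu hu0 hball hub hDb hη0 hη hρ0 hv hδ
  set R := rad u ρ δ v with hRdef
  have hRIcc : R ∈ Icc 0 ρ := ⟨hm.1.le, hm.2.le⟩
  have hE2l : R^2 ≤ Real.exp (2*δ) := he ▸ ray_lb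
  have hE2u : Real.exp (2*δ) ≤ (1+η^2)*R^2 := he ▸ ray_ub hub hη0 hv hRIcc
  have hDb' := abs_le.1 (rayD_bound hU hu hball hub hDb hη0 hv hRIcc)
  have hDl : 2*R*(1-η^2) ≤ rayD u v R := by linarith [hDb'.1]
  have hDu : rayD u v R ≤ 2*R*(1+η^2) := by linarith [hDb'.2]
  have hDpos : 0 < rayD u v R := rayD_pos hU hu hball hub hDb hη0 hη hv hm.1 hRIcc
  have hη2 : η^2 ≤ 1/4 := by nlinarith
  have hR0 : 0 < R := hm.1
  have hs1 : (1-3*η^2)*R ≤ 2*Real.exp (2*δ)/rayD u v R := by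
    rw [le_div_iff₀ hDpos]
    nlinarith [sq_nonneg η, sq_nonneg (η*η), mul_pos hR0 hR0]
  have hs2 : 2*Real.exp (2*δ)/rayD u v R ≤ (1+3*η^2)*R := by
    rw [div_le_iff₀ hDpos]
    nlinarith [sq_nonneg η, sq_nonneg (η*η), mul_pos hR0 hR0]
  have hpow : R^d = R^(d-1)*R := by
    conv_lhs => rw [show d = (d-1)+1 from (Nat.sub_add_cancel hd).symm]
    rw [pow_succ]
  have hXnn : (0:ℝ) ≤ R^(d-1) := pow_nonneg hR0.le _
  have hd0 : (d:ℝ) ≠ 0 := by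
    have : (1:ℝ) ≤ (d:ℝ) := by exact_mod_cast hd
    linarith
  have e1 : (d:ℝ)*(1-3*η^2)*(R^d/d) = R^(d-1)*((1-3*η^2)*R) := by
    rw [hpow]; field_simp
  have e2 : (d:ℝ)*(1+3*η^2)*(R^d/d) = R^(d-1)*((1+3*η^2)*R) := by
    rw [hpow]; field_simp
  refine ⟨?_, ?_, ?_, ?_⟩
  · rw [e1]; exact mul_le_mul_of_nonneg_left hs1 hXnn
  · rw [e2]; exact mul_le_mul_of_nonneg_left hs2 hXnn
  · exact mul_nonneg hXnn (div_nonneg (by positivity) hDpos.le)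
  · have h3 : R^(d-1) * (2*Real.exp (2*δ)/rayD u v R) ≤ R^(d-1)*((1+3*η^2)*R) :=
      mul_le_mul_of_nonneg_left hs2 hXnn
    have h4 : R^(d-1)*((1+3*η^2)*R) = (1+3*η^2)*R^d := by rw [hpow]; ring
    have h5 : R^d ≤ ρ^d := pow_le_pow_left₀ hR0.le hRIcc.2 d
    have h6 : (0:ℝ) ≤ R^d := pow_nonneg hR0.le _
    nlinarith
include hU hu hu0 hball hub hDb hη0 hη hρ0 in
private lemma sublevel_eq (hd : 1 ≤ d) (hδ : δ < Real.log ρ) :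
    sublevel U u δ
      = {y : EuclideanSpace ℝ (Fin d) | ‖y‖ ^ 2 + ‖u y‖ ^ 2 < Real.exp (2*δ)}
        ∩ ball (0 : EuclideanSpace ℝ (Fin d)) ρ := by
  ext y
  simp only [sublevel, mem_setOf_eq, mem_inter_iff, mem_ball_zero_iff]
  constructor
  · rintro ⟨hyU, hlt⟩
    refine ⟨hlt, ?_⟩
    have h1 : ‖y‖^2 < ρ^2 := by
      have := exp_lt hρ0 hδ
      nlinarith [sq_nonneg (‖u y‖)]
    exact lt_of_pow_lt_pow_left₀ 2 hρ0.le h1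
  · rintro ⟨hlt, hyρ⟩
    exact ⟨hball (ball_subset_closedBall (mem_ball_zero_iff.2 hyρ)), hlt⟩

include hU hu hu0 hball hub hDb hη0 hη hρ0 in
private lemma vol_pos (hd : 1 ≤ d) (hδ : δ < Real.log ρ) : 0 < sublevelVol U u δ := by
  have hexpρ : Real.exp δ < ρ := by
    calc Real.exp δ < Real.exp (Real.log ρ) := Real.exp_lt_exp.2 hδ
    _ = ρ := Real.exp_log hρ0
  set r₀ : ℝ := Real.exp δ / 2 with hr₀def
  have hr₀0 : 0 < r₀ := by positivity
  have hsub : ball (0 : EuclideanSpace ℝ (Fin d)) r₀ ⊆ sublevel U u δ := by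
    intro y hy
    rw [mem_ball_zero_iff] at hy
    have hyρ : y ∈ closedBall (0 : EuclideanSpace ℝ (Fin d)) ρ := by
      rw [mem_closedBall_zero_iff]
      have : r₀ < ρ := by rw [hr₀def]; linarith [Real.exp_pos δ]
      linarith
    refine ⟨hball hyρ, ?_⟩
    have h1 : ‖u y‖ ≤ η * ‖y‖ := hub y hyρ
    have h2 : ‖u y‖^2 ≤ η^2 * ‖y‖^2 := by nlinarith [norm_nonneg (u y), norm_nonneg y, mul_nonneg hη0.le (norm_nonneg y)]
    have hη2 : η^2 ≤ 1/4 := by nlinarith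
    have h3 : ‖y‖^2 < r₀^2 := by nlinarith [norm_nonneg y]
    have h4 : Real.exp (2*δ) = 4 * r₀^2 := by
      rw [hr₀def, two_mul, Real.exp_add]; ring
    nlinarith [norm_nonneg y, sq_nonneg ‖y‖]
  have hfin : volume (sublevel U u δ) < ⊤ := by
    apply lt_of_le_of_lt (measure_mono ?_) (measure_ball_lt_top (x := (0:EuclideanSpace ℝ (Fin d))) (r := ρ))
    rw [sublevel_eq hU hu hu0 hball hub hDb hη0 hη hρ0 hd hδ]
    exact inter_subset_right
  have hpos : 0 < volume (sublevel U u δ) :=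
    lt_of_lt_of_le (measure_ball_pos volume 0 hr₀0) (measure_mono hsub)
  rw [sublevelVol]
  exact ENNReal.toReal_pos hpos.ne' hfin.ne

include hU hu hu0 hball hub hDb hη0 hη hρ0 in
private lemma vol_eq (hd : 1 ≤ d) (hδ : δ < Real.log ρ) :
    sublevelVol U u δ = ∫ w : sphere (0 : EuclideanSpace ℝ (Fin d)) 1,
      (rad u ρ δ (w : EuclideanSpace ℝ (Fin d)))^d / d ∂(volume.toSphere) := by
  haveI : Nontrivial (EuclideanSpace ℝ (Fin d)) := by
    apply Module.nontrivial_of_finrank_pos (R := ℝ)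
    rw [finrank_euclideanSpace_fin]; omega
  have hcrad := rad_cont_sphere hU hu hu0 hball hub hDb hη0 hη hρ0 hδ
  -- the polar region
  set T : Set (sphere (0 : EuclideanSpace ℝ (Fin d)) 1 × Ioi (0:ℝ)) :=
    {p | (p.2 : ℝ) < rad u ρ δ (p.1 : EuclideanSpace ℝ (Fin d))} with hTdef
  have hT : MeasurableSet T := by
    apply measurableSet_lt
    · exact (continuous_subtype_val.comp continuous_snd).measurable
    · exact (hcrad.comp continuous_fst).measurable
  -- preimage identity
  have hpre : (homeomorphUnitSphereProd (EuclideanSpace ℝ (Fin d))) ⁻¹' T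
      = (Subtype.val) ⁻¹' (sublevel U u δ) := by
    ext x
    have hx0 : (x : EuclideanSpace ℝ (Fin d)) ≠ 0 := x.2
    have hxn : ‖(x : EuclideanSpace ℝ (Fin d))‖ ≠ 0 := norm_ne_zero_iff.2 hx0
    have hxpos : 0 < ‖(x : EuclideanSpace ℝ (Fin d))‖ := norm_pos_iff.2 hx0
    set w : EuclideanSpace ℝ (Fin d) := ‖(x : EuclideanSpace ℝ (Fin d))‖⁻¹ • (x : EuclideanSpace ℝ (Fin d)) with hwdef
    have hnw : ‖w‖ = 1 := by
      rw [hwdef, norm_smul, norm_inv, norm_norm, inv_mul_cancel₀ hxn]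
    have hxw : ‖(x : EuclideanSpace ℝ (Fin d))‖ • w = (x : EuclideanSpace ℝ (Fin d)) := by
      rw [hwdef]; exact smul_inv_smul₀ hxn _
    have hrayx : ray u w ‖(x : EuclideanSpace ℝ (Fin d))‖
        = ‖(x : EuclideanSpace ℝ (Fin d))‖^2 + ‖u (x : EuclideanSpace ℝ (Fin d))‖^2 := by
      rw [ray, hxw]
    have hmemT : x ∈ (homeomorphUnitSphereProd (EuclideanSpace ℝ (Fin d))) ⁻¹' T
        ↔ ‖(x : EuclideanSpace ℝ (Fin d))‖ < rad u ρ δ w := by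
      simp only [mem_preimage, hTdef, mem_setOf_eq, homeomorphUnitSphereProd_apply_fst_coe,
        homeomorphUnitSphereProd_apply_snd_coe, hwdef, one_smul, div_one]
    rw [mem_preimage] at *
    constructor
    · intro hmem
      rw [hmemT] at hmem
      obtain ⟨hm, he⟩ := rad_spec hU hu hu0 hball hub hDb hη0 hη hρ0 hnw hδ
      have hxIcc : ‖(x : EuclideanSpace ℝ (Fin d))‖ ∈ Icc 0 ρ :=
        ⟨norm_nonneg _, (hmem.trans hm.2).le⟩
      have := (rad_lt_iff hU hu hu0 hball hub hDb hη0 hη hρ0 hnw hδ hxIcc).1 hmem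
      rw [hrayx] at this
      refine ⟨hball ?_, this⟩
      rw [mem_closedBall_zero_iff]
      exact hxIcc.2
    · intro hmem
      obtain ⟨hyU, hlt⟩ := hmem
      rw [hmemT]
      have h1 : ‖(x : EuclideanSpace ℝ (Fin d))‖^2 < ρ^2 := by
        have := exp_lt hρ0 hδ
        nlinarith [sq_nonneg (‖u (x : EuclideanSpace ℝ (Fin d))‖)]
      have hxρ : ‖(x : EuclideanSpace ℝ (Fin d))‖ < ρ := lt_of_pow_lt_pow_left₀ 2 hρ0.le h1
      have hxIcc : ‖(x : EuclideanSpace ℝ (Fin d))‖ ∈ Icc 0 ρ := ⟨norm_nonneg _, hxρ.le⟩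
      apply (rad_lt_iff hU hu hu0 hball hub hDb hη0 hη hρ0 hnw hδ hxIcc).2
      rw [hrayx]
      exact hlt
  -- measure identity
  have h0 : volume (sublevel U u δ)
      = Measure.comap Subtype.val volume
        ((Subtype.val : ({(0:EuclideanSpace ℝ (Fin d))}ᶜ : Set (EuclideanSpace ℝ (Fin d))) → EuclideanSpace ℝ (Fin d)) ⁻¹' (sublevel U u δ)) := by
    rw [comap_subtype_coe_apply (measurableSet_singleton (0:EuclideanSpace ℝ (Fin d))).compl,
      Subtype.image_preimage_coe, inter_comm, ← Set.diff_eq]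
    exact (measure_diff_null (measure_singleton _)).symm
  have h1 := (Measure.measurePreserving_homeomorphUnitSphereProd
    (volume : Measure (EuclideanSpace ℝ (Fin d)))).measure_preimage hT.nullMeasurableSet
  rw [hpre] at h1
  have h2 : (Measure.prod ((volume : Measure (EuclideanSpace ℝ (Fin d))).toSphere)
        (Measure.volumeIoiPow (Module.finrank ℝ (EuclideanSpace ℝ (Fin d)) - 1))) T
      = ∫⁻ w : sphere (0 : EuclideanSpace ℝ (Fin d)) 1,
          ENNReal.ofReal ((rad u ρ δ (w : EuclideanSpace ℝ (Fin d)))^d / d) ∂(volume.toSphere) := by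
    rw [Measure.prod_apply hT]
    congr 1
    funext w
    have hw1 : ‖(w : EuclideanSpace ℝ (Fin d))‖ = 1 := mem_sphere_zero_iff_norm.1 w.2
    obtain ⟨hm, _⟩ := rad_spec hU hu hu0 hball hub hDb hη0 hη hρ0 hw1 hδ
    have hsec : (Prod.mk w ⁻¹' T)
        = Iio (⟨rad u ρ δ (w : EuclideanSpace ℝ (Fin d)), hm.1⟩ : Ioi (0:ℝ)) := by
      ext t
      simp only [hTdef, mem_preimage, mem_setOf_eq, mem_Iio, Subtype.mk_lt_mk,
        ← Subtype.coe_lt_coe]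
    have hcast : ((d-1 : ℕ) : ℝ) + 1 = (d : ℝ) := by
      rw [Nat.cast_sub hd]; push_cast; ring
    rw [hsec, Measure.volumeIoiPow_apply_Iio, finrank_euclideanSpace_fin]
    congr 1
    rw [Nat.sub_add_cancel hd, hcast]
  -- integrability
  have hradmem : ∀ w : sphere (0 : EuclideanSpace ℝ (Fin d)) 1,
      rad u ρ δ (w : EuclideanSpace ℝ (Fin d)) ∈ Ioo 0 ρ := fun w =>
    (rad_spec hU hu hu0 hball hub hDb hη0 hη hρ0 (mem_sphere_zero_iff_norm.1 w.2) hδ).1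
  have hcP : Continuous (fun w : sphere (0 : EuclideanSpace ℝ (Fin d)) 1 =>
      (rad u ρ δ (w : EuclideanSpace ℝ (Fin d)))^d / d) := (hcrad.pow d).div_const d
  have hPnn : ∀ w : sphere (0 : EuclideanSpace ℝ (Fin d)) 1,
      0 ≤ (rad u ρ δ (w : EuclideanSpace ℝ (Fin d)))^d / d := fun w => by
    have := (hradmem w).1
    positivity
  have hint : Integrable (fun w : sphere (0 : EuclideanSpace ℝ (Fin d)) 1 =>
      (rad u ρ δ (w : EuclideanSpace ℝ (Fin d)))^d / d) volume.toSphere := by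
    apply Integrable.mono' (integrable_const (ρ^d / d)) hcP.aestronglyMeasurable
    filter_upwards with w
    rw [Real.norm_eq_abs, abs_of_nonneg (hPnn w)]
    have h5 : (rad u ρ δ (w : EuclideanSpace ℝ (Fin d)))^d ≤ ρ^d :=
      pow_le_pow_left₀ (hradmem w).1.le (hradmem w).2.le d
    have h6 : (0:ℝ) < d := by exact_mod_cast hd
    exact (div_le_div_iff_of_pos_right h6).mpr h5
  have hofReal := MeasureTheory.ofReal_integral_eq_lintegral_ofReal hint
    (Filter.Eventually.of_forall hPnn)
  rw [sublevelVol, h0, h1, h2, ← hofReal,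
    ENNReal.toReal_ofReal (integral_nonneg (fun w => hPnn w))]

include hU hu hu0 hball hub hDb hη0 hη hρ0 in
private theorem sublevel_aux' (hd : 1 ≤ d) :
    ∀ δ < Real.log ρ,
      0 < sublevelVol U u δ ∧ ∃ A : ℝ, HasDerivAt (sublevelVol U u) A δ ∧
        (d:ℝ) * (1 - 3*η^2) * sublevelVol U u δ ≤ A ∧
        A ≤ (d:ℝ) * (1 + 3*η^2) * sublevelVol U u δ := by
  intro δ hδ
  refine ⟨vol_pos hU hu hu0 hball hub hDb hη0 hη hρ0 hd hδ, ?_⟩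
  have hw1 : ∀ w : sphere (0:EuclideanSpace ℝ (Fin d)) 1,
      ‖(w : EuclideanSpace ℝ (Fin d))‖ = 1 := fun w => mem_sphere_zero_iff_norm.1 w.2
  have hε0 : 0 < Real.log ρ - δ := by linarith
  have hball_sub : ∀ s ∈ Metric.ball δ (Real.log ρ - δ), s < Real.log ρ := by
    intro s hs; rw [Metric.mem_ball, Real.dist_eq, abs_lt] at hs; linarith [hs.2]
  have hmeas : ∀ s < Real.log ρ, AEStronglyMeasurable
      (fun w : sphere (0:EuclideanSpace ℝ (Fin d)) 1 =>
        (rad u ρ s (w : EuclideanSpace ℝ (Fin d)))^d / d)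
      ((volume : Measure (EuclideanSpace ℝ (Fin d))).toSphere) := fun s hs =>
    (((rad_cont_sphere hU hu hu0 hball hub hDb hη0 hη hρ0 hs).pow d).div_const d).aestronglyMeasurable
  have hradmem : ∀ s < Real.log ρ, ∀ w : sphere (0 : EuclideanSpace ℝ (Fin d)) 1,
      rad u ρ s (w : EuclideanSpace ℝ (Fin d)) ∈ Ioo 0 ρ := fun s hs w =>
    (rad_spec hU hu hu0 hball hub hDb hη0 hη hρ0 (hw1 w) hs).1
  have hd0 : (0:ℝ) < d := by exact_mod_cast hd
  have hFint : ∀ s < Real.log ρ, Integrable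
      (fun w : sphere (0:EuclideanSpace ℝ (Fin d)) 1 =>
        (rad u ρ s (w : EuclideanSpace ℝ (Fin d)))^d / d)
      ((volume : Measure (EuclideanSpace ℝ (Fin d))).toSphere) := by
    intro s hs
    apply Integrable.mono' (integrable_const (ρ^d / d)) (hmeas s hs)
    filter_upwards with w
    have h1 := (hradmem s hs w).1
    have h2 := (hradmem s hs w).2
    have hnn : (0:ℝ) ≤ (rad u ρ s (w : EuclideanSpace ℝ (Fin d)))^d / d :=
      div_nonneg (pow_nonneg h1.le d) hd0.le
    rw [Real.norm_eq_abs, abs_of_nonneg hnn]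
    exact (div_le_div_iff_of_pos_right hd0).mpr (pow_le_pow_left₀ h1.le h2.le d)
  have hder : ∀ s < Real.log ρ, ∀ w : sphere (0:EuclideanSpace ℝ (Fin d)) 1,
      HasDerivAt (fun s' => (rad u ρ s' (w : EuclideanSpace ℝ (Fin d)))^d / d)
        ((rad u ρ s (w:EuclideanSpace ℝ (Fin d)))^(d-1)
          * (2 * Real.exp (2*s) / rayD u (w:EuclideanSpace ℝ (Fin d))
              (rad u ρ s (w:EuclideanSpace ℝ (Fin d))))) s := fun s hs w =>
    P_hasDerivAt hU hu hu0 hball hub hDb hη0 hη hρ0 hd (hw1 w) hs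
  have hF'meas : AEStronglyMeasurable
      (fun w : sphere (0:EuclideanSpace ℝ (Fin d)) 1 =>
        (rad u ρ δ (w:EuclideanSpace ℝ (Fin d)))^(d-1)
          * (2 * Real.exp (2*δ) / rayD u (w:EuclideanSpace ℝ (Fin d))
              (rad u ρ δ (w:EuclideanSpace ℝ (Fin d)))))
      ((volume : Measure (EuclideanSpace ℝ (Fin d))).toSphere) := by
    have hn : ∀ n : ℕ, δ - 1/(n+1) < Real.log ρ := by
      intro n
      have : (0:ℝ) < 1/(n+1) := by positivity
      linarith
    have hseqm : ∀ n : ℕ, AEStronglyMeasurable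
        (fun w : sphere (0:EuclideanSpace ℝ (Fin d)) 1 =>
          slope (fun s' => (rad u ρ s' (w : EuclideanSpace ℝ (Fin d)))^d / d)
            δ (δ - 1/(n+1)))
        ((volume : Measure (EuclideanSpace ℝ (Fin d))).toSphere) := by
      intro n
      simp only [slope_def_field, div_eq_mul_inv]
      exact (((((rad_cont_sphere hU hu hu0 hball hub hDb hη0 hη hρ0 (hn n)).pow d).mul continuous_const).sub
        (((rad_cont_sphere hU hu hu0 hball hub hDb hη0 hη hρ0 hδ).pow d).mul
        continuous_const)).mul continuous_const).aestronglyMeasurable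
    apply aestronglyMeasurable_of_tendsto_ae atTop hseqm
    apply Filter.Eventually.of_forall
    intro w
    have hslope := hasDerivAt_iff_tendsto_slope.1 (hder δ hδ w)
    have hseq : Tendsto (fun n : ℕ => δ - 1/(n+1)) atTop (𝓝[≠] δ) := by
      apply tendsto_nhdsWithin_of_tendsto_nhds_of_eventually_within
      · have h1 : Tendsto (fun n : ℕ => 1/((n:ℝ)+1)) atTop (𝓝 0) :=
          tendsto_one_div_add_atTop_nhds_zero_nat
        have h2 : Tendsto (fun n : ℕ => δ - 1/((n:ℝ)+1)) atTop (𝓝 (δ - 0)) :=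
          tendsto_const_nhds.sub h1
        simpa using h2
      · filter_upwards with n
        have h3 : (0:ℝ) < 1/(n+1) := by positivity
        simp only [mem_compl_iff, mem_singleton_iff]
        have h4 : δ - 1/((n:ℝ)+1) < δ := by linarith
        exact h4.ne
    exact hslope.comp hseq
  have h_bound : ∀ᵐ (w : sphere (0:EuclideanSpace ℝ (Fin d)) 1) ∂((volume : Measure (EuclideanSpace ℝ (Fin d))).toSphere),
      ∀ s ∈ Metric.ball δ (Real.log ρ - δ),
        ‖(rad u ρ s (w:EuclideanSpace ℝ (Fin d)))^(d-1)
          * (2 * Real.exp (2*s) / rayD u (w:EuclideanSpace ℝ (Fin d))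
              (rad u ρ s (w:EuclideanSpace ℝ (Fin d))))‖ ≤ 2*ρ^d := by
    apply Filter.Eventually.of_forall
    intro w s hs
    obtain ⟨hb1, hb2, hb3, hb4⟩ :=
      D_bounds hU hu hu0 hball hub hDb hη0 hη hρ0 hd (hw1 w) (hball_sub s hs)
    rw [Real.norm_eq_abs, abs_of_nonneg hb3]
    exact hb4
  obtain ⟨hF'int, hderiv⟩ := hasDerivAt_integral_of_dominated_loc_of_deriv_le (Metric.ball_mem_nhds δ hε0)
    (Filter.Eventually.mono (Iio_mem_nhds hδ) (fun s hs => hmeas s hs))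
    (hFint δ hδ) hF'meas h_bound (integrable_const _)
    (Filter.Eventually.of_forall (fun w s hs => hder s (hball_sub s hs) w))
  have hcongr : sublevelVol U u =ᶠ[𝓝 δ] (fun s => ∫ w : sphere (0:EuclideanSpace ℝ (Fin d)) 1,
      (rad u ρ s (w : EuclideanSpace ℝ (Fin d)))^d / d
      ∂((volume : Measure (EuclideanSpace ℝ (Fin d))).toSphere)) := by
    filter_upwards [Iio_mem_nhds hδ] with s hs
    exact vol_eq hU hu hu0 hball hub hDb hη0 hη hρ0 hd hs
  have hAderiv : HasDerivAt (sublevelVol U u)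
      (∫ w : sphere (0:EuclideanSpace ℝ (Fin d)) 1,
        (rad u ρ δ (w:EuclideanSpace ℝ (Fin d)))^(d-1)
          * (2 * Real.exp (2*δ) / rayD u (w:EuclideanSpace ℝ (Fin d))
              (rad u ρ δ (w:EuclideanSpace ℝ (Fin d))))
        ∂((volume : Measure (EuclideanSpace ℝ (Fin d))).toSphere)) δ :=
    hderiv.congr_of_eventuallyEq hcongr
  refine ⟨_, hAderiv, ?_, ?_⟩
  · rw [vol_eq hU hu hu0 hball hub hDb hη0 hη hρ0 hd hδ, ← integral_const_mul]
    apply integral_mono ((hFint δ hδ).const_mul _) hF'int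
    intro w
    exact (D_bounds hU hu hu0 hball hub hDb hη0 hη hρ0 hd (hw1 w) hδ).1
  · rw [vol_eq hU hu hu0 hball hub hDb hη0 hη hρ0 hd hδ, ← integral_const_mul]
    apply integral_mono hF'int ((hFint δ hδ).const_mul _)
    intro w
    exact (D_bounds hU hu hu0 hball hub hDb hη0 hη hρ0 hd (hw1 w) hδ).2.1


end Aux

/-- **Volume derivative of sublevel sets.** Let `u : U → ℝ^{D-d}` be smooth on an open `U ∋ 0`
with `u(0) = 0` and `Du(0) = 0` (here `m` plays the role of `D - d`), and let
`A_δ = (∂/∂δ) Vol(V_δ)` be the derivative in `δ` of the volume of the sublevel set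
`V_δ = {y ∈ U : ‖y‖² + ‖u(y)‖² < e^{2δ}}`. Then for every `ε > 0` there is `K` such that for
all `δ < K`, `(d - ε) Vol(V_δ) < A_δ < (d + ε) Vol(V_δ)`; in particular
`A_δ / Vol(V_δ) → d` as `δ → -∞`. -/
theorem sublevel_volume_derivative
    {d m : ℕ} (U : Set (EuclideanSpace ℝ (Fin d)))
    (hU : IsOpen U) (h0U : (0 : EuclideanSpace ℝ (Fin d)) ∈ U)
    (u : EuclideanSpace ℝ (Fin d) → EuclideanSpace ℝ (Fin m))
    (hu : ContDiffOn ℝ (⊤ : ℕ∞) u U) (hu0 : u 0 = 0) (hDu0 : fderiv ℝ u 0 = 0) :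
    (∀ ε > (0 : ℝ), ∃ K : ℝ, ∀ δ < K,
      ((d : ℝ) - ε) * sublevelVol U u δ < deriv (sublevelVol U u) δ ∧
      deriv (sublevelVol U u) δ < ((d : ℝ) + ε) * sublevelVol U u δ) ∧
    Tendsto (fun δ : ℝ => deriv (sublevelVol U u) δ / sublevelVol U u δ)
      atBot (𝓝 (d : ℝ)) := by
  have key : ∀ ε > (0:ℝ), ∃ K : ℝ, ∀ δ < K,
      0 < sublevelVol U u δ ∧
      ((d : ℝ) - ε) * sublevelVol U u δ < deriv (sublevelVol U u) δ ∧
      deriv (sublevelVol U u) δ < ((d : ℝ) + ε) * sublevelVol U u δ := by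
    rcases Nat.eq_zero_or_pos d with hd | hd
    · subst hd
      haveI : Subsingleton (EuclideanSpace ℝ (Fin 0)) :=
        ⟨fun a b => by ext i; exact i.elim0⟩
      have hs : ∀ δ, sublevel U u δ = univ := by
        intro δ; ext y
        have hy : y = 0 := Subsingleton.elim y 0
        simp [sublevel, hy, h0U, hu0, Real.exp_pos]
      have hv : sublevelVol U u = fun _ => 1 := by
        funext δ
        rw [sublevelVol, hs, volume_euclideanSpace_eq_dirac]
        simp
      intro ε hε
      refine ⟨0, fun δ _ => ?_⟩
      rw [hv]
      refine ⟨by norm_num, ?_, ?_⟩ <;> simp only [deriv_const'] <;> push_cast <;> norm_num <;> linarith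
    · intro ε hε
      have hd' : (1:ℝ) ≤ d := by exact_mod_cast hd
      set η : ℝ := min (1/2) (Real.sqrt (ε / (6*d))) with hηdef
      have hη0 : 0 < η := lt_min (by norm_num) (Real.sqrt_pos.2 (by positivity))
      have hη2 : η ≤ 1/2 := min_le_left _ _
      have hη3 : 3*(d:ℝ)*η^2 ≤ ε/2 := by
        have h1 : η^2 ≤ ε/(6*(d:ℝ)) := by
          have h2 := min_le_right (1/2) (Real.sqrt (ε / (6*(d:ℝ))))
          have h3 : (0:ℝ) ≤ Real.sqrt (ε / (6*(d:ℝ))) := Real.sqrt_nonneg _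
          calc η^2 ≤ (Real.sqrt (ε/(6*(d:ℝ))))^2 := by nlinarith [hη0.le]
          _ = ε/(6*(d:ℝ)) := Real.sq_sqrt (by positivity)
        calc 3*(d:ℝ)*η^2 ≤ 3*(d:ℝ)*(ε/(6*(d:ℝ))) := by nlinarith
        _ = ε/2 := by field_simp; ring
      obtain ⟨ρ, hρ0, hball, hDb⟩ : ∃ ρ > 0,
          Metric.closedBall (0:EuclideanSpace ℝ (Fin d)) ρ ⊆ U ∧
          ∀ y ∈ Metric.closedBall (0:EuclideanSpace ℝ (Fin d)) ρ, ‖fderiv ℝ u y‖ ≤ η := by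
        have hcf : ContinuousAt (fderiv ℝ u) 0 :=
          (hu.continuousOn_fderiv_of_isOpen hU (by exact_mod_cast le_top)).continuousAt (hU.mem_nhds h0U)
        have h1 : ∀ᶠ y in 𝓝 (0:EuclideanSpace ℝ (Fin d)), ‖fderiv ℝ u y‖ < η := by
          have h2 := hcf.tendsto.norm
          rw [hDu0, norm_zero] at h2
          exact h2.eventually_lt_const hη0
        obtain ⟨r, hr0, hr⟩ := Metric.mem_nhds_iff.1 (Filter.inter_mem (hU.mem_nhds h0U) h1)
        refine ⟨r/2, by positivity, ?_, ?_⟩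
        · exact fun y hy => (hr ((Metric.closedBall_subset_ball (by linarith)) hy)).1
        · exact fun y hy => (hr ((Metric.closedBall_subset_ball (by linarith)) hy)).2.le
      have hK := sublevel_aux' hU hu hu0 hball
        (fun y hy => by
          have h5 := (convex_closedBall (0:EuclideanSpace ℝ (Fin d)) ρ).norm_image_sub_le_of_norm_fderiv_le
            (fun x hx => (hu.contDiffAt (hU.mem_nhds (hball hx))).differentiableAt (by simp))
            (fun x hx => hDb x hx) (Metric.mem_closedBall_self hρ0.le) hy
          simpa [hu0] using h5) hDb hη0 hη2 hρ0 hd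
      refine ⟨Real.log ρ, fun δ hδ => ?_⟩
      obtain ⟨hpos, A, hA, h1, h2⟩ := hK δ hδ
      rw [hA.deriv]
      have f1 : 3*(d:ℝ)*η^2*(sublevelVol U u δ) ≤ ε/2*(sublevelVol U u δ) :=
        mul_le_mul_of_nonneg_right hη3 hpos.le
      have f2 : 0 < ε*(sublevelVol U u δ) := mul_pos hε hpos
      have e1 : (d:ℝ)*(1-3*η^2)*(sublevelVol U u δ)
          = (d:ℝ)*(sublevelVol U u δ) - 3*(d:ℝ)*η^2*(sublevelVol U u δ) := by ring
      have e2 : (d:ℝ)*(1+3*η^2)*(sublevelVol U u δ)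
          = (d:ℝ)*(sublevelVol U u δ) + 3*(d:ℝ)*η^2*(sublevelVol U u δ) := by ring
      rw [e1] at h1
      rw [e2] at h2
      refine ⟨hpos, by rw [sub_mul]; linarith, by rw [add_mul]; linarith⟩
  constructor
  · intro ε hε; obtain ⟨K, hK⟩ := key ε hε
    exact ⟨K, fun δ hδ => ⟨(hK δ hδ).2.1, (hK δ hδ).2.2⟩⟩
  · rw [Metric.tendsto_nhds]
    intro ε hε
    obtain ⟨K, hK⟩ := key (ε/2) (by positivity)
    filter_upwards [eventually_lt_atBot K] with δ hδ
    obtain ⟨hpos, h1, h2⟩ := hK δ hδ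
    have e1 : deriv (sublevelVol U u) δ / sublevelVol U u δ < (d:ℝ) + ε/2 :=
      (div_lt_iff₀ hpos).2 (by linarith)
    have e2 : (d:ℝ) - ε/2 < deriv (sublevelVol U u) δ / sublevelVol U u δ :=
      (lt_div_iff₀ hpos).2 (by linarith)
    rw [Real.dist_eq, abs_lt]
    constructor <;> linarith
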